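/- (Weak duality.) Assume condition (PCLI1) and that the map (y,b) ↦ g(y,b) is jointly Borel measurable. Fix a state x ∈ ℝ and a price λ ∈ ℝ. Suppose (μ, γ₀) is primal feasible: μ is a Borel measure on ℝ with ∫ w dμ < ∞, γ₀ ∈ ℝ, and (i) ∫_{(b,∞)} g(y,b) μ(dy) + γ₀ ≥ G(x,b) for every b ∈ ℝ, (ii) ∫_ℝ g(y,−∞) μ(dy) + γ₀ = G(x,−∞), (iii) γ₀ ≥ G(x,∞). Suppose (ψ, η, ξ) is dual feasible: ψ : ℝ → ℝ is bounded, continuous and nondecreasing with Lebesgue–Stieltjes measure ν_ψ, η ∈ ℝ, ξ ≥ 0, and (iv) ∫_{(−∞,y)} g(y,b) ν_ψ(db) + g(y,−∞)·η ≤ f(y,−∞) for every y ∈ ℝ, (v) ν_ψ(ℝ) + η + ξ = λ. Then ∫_ℝ f(y,−∞) μ(dy) + λ·γ₀ ≥ ∫_ℝ G(x,b) ν_ψ(db) + G(x,−∞)·η + G(x,∞)·ξ. -/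

import Mathlib

open MeasureTheory ProbabilityTheory Filter Topology Set

noncomputable section

/-- A restless bandit project: the model data (discount factor `β`, passive/active
Markov transition kernels `κ false`/`κ true`, reward `r` and resource consumption `c`),
Assumption 1 (the weighted sup-norm conditions for weight `w` and constants `M`, `γ`),
together with the threshold-policy performance metrics `F`, `G` (for `z`-policies,
active iff `x > z`), `Fm`, `Gm` (for `z⁻`-policies, active iff `x ≥ z`), and the
optimal value function `V lam` of the `lam`-price problem, each of which is the
(unique) `w`-bounded measurable solution of its fixed-point equation. -/
structure Bandit where
  β : ℝ
  κ : Bool → Kernel ℝ ℝ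
  r : ℝ → Bool → ℝ
  c : ℝ → Bool → ℝ
  w : ℝ → ℝ
  M : ℝ
  γ : ℝ
  F : ℝ → EReal → ℝ
  G : ℝ → EReal → ℝ
  Fm : ℝ → EReal → ℝ
  Gm : ℝ → EReal → ℝ
  V : ℝ → ℝ → ℝ
  hβ0 : 0 ≤ β
  hβ1 : β < 1
  hκ : ∀ a, IsMarkovKernel (κ a)
  hr_cont : ∀ a, Continuous fun x => r x a
  hc_cont : ∀ a, Continuous fun x => c x a
  hc0 : ∀ x, 0 ≤ c x false
  hc01 : ∀ x, c x false < c x true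
  hw_meas : Measurable w
  hw_one : ∀ x, 1 ≤ w x
  hM : 0 < M
  hβγ : β ≤ γ
  hγ1 : γ < 1
  hr_bd : ∀ x a, |r x a| ≤ M * w x
  hc_bd : ∀ x a, c x a ≤ M * w x
  hw_int : ∀ a x, Integrable w (κ a x)
  hw_drift : ∀ a x, β * ∫ y, w y ∂(κ a x) ≤ γ * w x
  hF_meas : ∀ z, Measurable fun x => F x z
  hG_meas : ∀ z, Measurable fun x => G x z
  hFm_meas : ∀ z, Measurable fun x => Fm x z
  hGm_meas : ∀ z, Measurable fun x => Gm x z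
  hV_meas : ∀ lam, Measurable (V lam)
  hF_bdd : ∀ z, ∃ C, ∀ x, |F x z| ≤ C * w x
  hG_bdd : ∀ z, ∃ C, ∀ x, |G x z| ≤ C * w x
  hFm_bdd : ∀ z, ∃ C, ∀ x, |Fm x z| ≤ C * w x
  hGm_bdd : ∀ z, ∃ C, ∀ x, |Gm x z| ≤ C * w x
  hV_bdd : ∀ lam, ∃ C, ∀ x, |V lam x| ≤ C * w x
  hF_eq : ∀ x z, F x z =
    r x (decide (z < (x : EReal))) +
      β * ∫ y, F y z ∂(κ (decide (z < (x : EReal))) x)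
  hG_eq : ∀ x z, G x z =
    c x (decide (z < (x : EReal))) +
      β * ∫ y, G y z ∂(κ (decide (z < (x : EReal))) x)
  hFm_eq : ∀ x z, Fm x z =
    r x (decide (z ≤ (x : EReal))) +
      β * ∫ y, Fm y z ∂(κ (decide (z ≤ (x : EReal))) x)
  hGm_eq : ∀ x z, Gm x z =
    c x (decide (z ≤ (x : EReal))) +
      β * ∫ y, Gm y z ∂(κ (decide (z ≤ (x : EReal))) x)
  hV_eq : ∀ lam x, V lam x =
    max (r x false - lam * c x false + β * ∫ y, V lam y ∂(κ false x))
        (r x true - lam * c x true + β * ∫ y, V lam y ∂(κ true x))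

/-- `ν` is the Lebesgue–Stieltjes measure of the (bounded nonincreasing
right-continuous) function `h`: `ν(z₁,z₂] = h z₁ - h z₂`. -/
def IsLSMeasureOfAnti (h : ℝ → ℝ) (ν : Measure ℝ) : Prop :=
  ∀ z₁ z₂ : ℝ, z₁ ≤ z₂ → ν (Set.Ioc z₁ z₂) = ENNReal.ofReal (h z₁ - h z₂)

/-- `ν` is the Lebesgue–Stieltjes measure of the (bounded nondecreasing
right-continuous) function `h`: `ν(z₁,z₂] = h z₂ - h z₁`. -/
def IsLSMeasureOfMono (h : ℝ → ℝ) (ν : Measure ℝ) : Prop :=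
  ∀ z₁ z₂ : ℝ, z₁ ≤ z₂ → ν (Set.Ioc z₁ z₂) = ENNReal.ofReal (h z₂ - h z₁)

/-- The real interval `(z₁, z₂] ⊆ ℝ` with extended-real endpoints. -/
def iocR (z₁ z₂ : EReal) : Set ℝ := {y : ℝ | z₁ < (y : EReal) ∧ (y : EReal) ≤ z₂}

/-- `t`-step distribution of the Markov chain with kernel `κ` and initial law `p`. -/
def kerIter (κ : Kernel ℝ ℝ) : ℕ → Measure ℝ → Measure ℝ
  | 0, p => p
  | (t + 1), p => (kerIter κ t p).bind fun x => κ x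

namespace Bandit

variable (P : Bandit)

/-- Marginal reward metric `f(x,z)` of the `z`-policy. -/
def f (x : ℝ) (z : EReal) : ℝ :=
  (P.r x true - P.r x false) +
    P.β * ((∫ y, P.F y z ∂(P.κ true x)) - ∫ y, P.F y z ∂(P.κ false x))

/-- Marginal resource metric `g(x,z)` of the `z`-policy. -/
def g (x : ℝ) (z : EReal) : ℝ :=
  (P.c x true - P.c x false) +
    P.β * ((∫ y, P.G y z ∂(P.κ true x)) - ∫ y, P.G y z ∂(P.κ false x))

/-- Marginal reward metric `f(x,z⁻)` of the `z⁻`-policy. -/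
def fm (x : ℝ) (z : EReal) : ℝ :=
  (P.r x true - P.r x false) +
    P.β * ((∫ y, P.Fm y z ∂(P.κ true x)) - ∫ y, P.Fm y z ∂(P.κ false x))

/-- Marginal resource metric `g(x,z⁻)` of the `z⁻`-policy. -/
def gm (x : ℝ) (z : EReal) : ℝ :=
  (P.c x true - P.c x false) +
    P.β * ((∫ y, P.Gm y z ∂(P.κ true x)) - ∫ y, P.Gm y z ∂(P.κ false x))

/-- Marginal productivity metric `m(x,z) = f(x,z)/g(x,z)`. -/
def m (x : ℝ) (z : EReal) : ℝ := P.f x z / P.g x z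

/-- Marginal productivity metric `m(x,z⁻) = f(x,z⁻)/g(x,z⁻)`. -/
def mm (x : ℝ) (z : EReal) : ℝ := P.fm x z / P.gm x z

/-- The marginal productivity (MP) index `m*(x) = m(x,x)`. -/
def mStar (x : ℝ) : ℝ := P.m x (x : EReal)

/-- The active action is `P_lam`-optimal at `x`. -/
def ActOpt (lam x : ℝ) : Prop :=
  P.r x false - lam * P.c x false + P.β * ∫ y, P.V lam y ∂(P.κ false x) ≤
    P.r x true - lam * P.c x true + P.β * ∫ y, P.V lam y ∂(P.κ true x)

/-- The passive action is `P_lam`-optimal at `x`. -/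
def PassOpt (lam x : ℝ) : Prop :=
  P.r x true - lam * P.c x true + P.β * ∫ y, P.V lam y ∂(P.κ true x) ≤
    P.r x false - lam * P.c x false + P.β * ∫ y, P.V lam y ∂(P.κ false x)

/-- The project is indexable with index `ν`. -/
def Indexable (ν : ℝ → ℝ) : Prop :=
  ∀ lam x, (P.ActOpt lam x ↔ lam ≤ ν x) ∧ (P.PassOpt lam x ↔ ν x ≤ lam)

/-- The `z`-policy is `P_lam`-optimal. -/
def ZPolicyOpt (z : EReal) (lam : ℝ) : Prop :=
  ∀ x, P.F x z - lam * P.G x z = P.V lam x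

/-- The `z⁻`-policy is `P_lam`-optimal. -/
def ZmPolicyOpt (z : EReal) (lam : ℝ) : Prop :=
  ∀ x, P.Fm x z - lam * P.Gm x z = P.V lam x

/-- The project is strongly threshold-indexable with index `ν`. -/
def StronglyThresholdIndexable (ν : ℝ → ℝ) : Prop :=
  P.Indexable ν ∧
    ∀ lam : ℝ, ∃ z : EReal, P.ZPolicyOpt z lam ∧ P.ZmPolicyOpt z lam

/-- PCL-indexability condition (PCLI1). -/
def PCLI1 : Prop := ∀ (x : ℝ) (z : EReal), 0 < P.g x z

/-- PCL-indexability condition (PCLI2). -/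
def PCLI2 : Prop :=
  Monotone P.mStar ∧ Continuous P.mStar ∧ BddBelow (Set.range P.mStar)

/-- PCL-indexability condition (PCLI3). -/
def PCLI3 : Prop :=
  ∀ x : ℝ, ∀ ν : Measure ℝ, IsLSMeasureOfAnti (fun z : ℝ => P.G x z) ν →
    ∀ z₁ z₂ : ℝ, z₁ < z₂ →
      P.F x z₂ - P.F x z₁ = -∫ z in Set.Ioc z₁ z₂, P.mStar z ∂ν

/-- The project is PCL-indexable. -/
def PCLIndexable : Prop := P.PCLI1 ∧ P.PCLI2 ∧ P.PCLI3

/-- Reward metric with initial distribution `p`. -/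
def Fp (p : Measure ℝ) (z : EReal) : ℝ := ∫ x, P.F x z ∂p

/-- Resource metric with initial distribution `p`. -/
def Gp (p : Measure ℝ) (z : EReal) : ℝ := ∫ x, P.G x z ∂p

/-- `z⁻`-policy reward metric with initial distribution `p`. -/
def Fmp (p : Measure ℝ) (z : EReal) : ℝ := ∫ x, P.Fm x z ∂p

/-- `z⁻`-policy resource metric with initial distribution `p`. -/
def Gmp (p : Measure ℝ) (z : EReal) : ℝ := ∫ x, P.Gm x z ∂p

/-- An admissible initial distribution: a probability measure with `∫ w dp < ∞`. -/
def IsInitDist (p : Measure ℝ) : Prop :=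
  IsProbabilityMeasure p ∧ Integrable P.w p

/-- The transition kernel of the `z`-policy (active iff `x > z`). -/
def thrKer (z : EReal) : Kernel ℝ ℝ :=
  haveI : DecidablePred (· ∈ {x : ℝ | z < (x : EReal)}) := Classical.decPred _
  Kernel.piecewise
    (show MeasurableSet {x : ℝ | z < (x : EReal)} from
      measurable_coe_real_ereal measurableSet_Ioi)
    (P.κ true) (P.κ false)

/-- The transition kernel of the `z⁻`-policy (active iff `x ≥ z`). -/
def thrKerM (z : EReal) : Kernel ℝ ℝ :=
  haveI : DecidablePred (· ∈ {x : ℝ | z ≤ (x : EReal)}) := Classical.decPred _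
  Kernel.piecewise
    (show MeasurableSet {x : ℝ | z ≤ (x : EReal)} from
      measurable_coe_real_ereal measurableSet_Ici)
    (P.κ true) (P.κ false)

/-- The (discounted) state occupation measure `μ_p^z` of the `z`-policy. -/
def occ (z : EReal) (p : Measure ℝ) : Measure ℝ :=
  Measure.sum fun t : ℕ => ENNReal.ofReal (P.β ^ t) • kerIter (P.thrKer z) t p

/-- The (discounted) state occupation measure `μ_p^{z⁻}` of the `z⁻`-policy. -/
def occM (z : EReal) (p : Measure ℝ) : Measure ℝ :=
  Measure.sum fun t : ℕ => ENNReal.ofReal (P.β ^ t) • kerIter (P.thrKerM z) t p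

end Bandit

/-- Finite-horizon reward metric `F_k(x,z)` (value iteration). -/
def Bandit.Fk (P : Bandit) : ℕ → ℝ → EReal → ℝ
  | 0, x, z => P.r x (decide (z < (x : EReal)))
  | (k + 1), x, z =>
      P.r x (decide (z < (x : EReal))) +
        P.β * ∫ y, Bandit.Fk P k y z ∂(P.κ (decide (z < (x : EReal))) x)

/-- Finite-horizon resource metric `G_k(x,z)` (value iteration). -/
def Bandit.Gk (P : Bandit) : ℕ → ℝ → EReal → ℝ
  | 0, x, z => P.c x (decide (z < (x : EReal)))
  | (k + 1), x, z =>
      P.c x (decide (z < (x : EReal))) +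
        P.β * ∫ y, Bandit.Gk P k y z ∂(P.κ (decide (z < (x : EReal))) x)

/-- Finite-horizon marginal reward metric `f_k(x,z)`. -/
def Bandit.fk (P : Bandit) : ℕ → ℝ → EReal → ℝ
  | 0, x, _ => P.r x true - P.r x false
  | (k + 1), x, z =>
      (P.r x true - P.r x false) +
        P.β * ((∫ y, P.Fk k y z ∂(P.κ true x)) - ∫ y, P.Fk k y z ∂(P.κ false x))

/-- Finite-horizon marginal resource metric `g_k(x,z)`. -/
def Bandit.gk (P : Bandit) : ℕ → ℝ → EReal → ℝ
  | 0, x, _ => P.c x true - P.c x false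
  | (k + 1), x, z =>
      (P.c x true - P.c x false) +
        P.β * ((∫ y, P.Gk k y z ∂(P.κ true x)) - ∫ y, P.Gk k y z ∂(P.κ false x))

namespace Bandit

variable (P : Bandit)

/-- Finite-horizon MP metric `m_k(x,z)`. -/
def mk' (k : ℕ) (x : ℝ) (z : EReal) : ℝ := P.fk k x z / P.gk k x z

/-- Finite-horizon MP index `m*_k(x)`. -/
def mkStar (k : ℕ) (x : ℝ) : ℝ := P.mk' k x (x : EReal)

/-- `g̲(x,z) = inf_k g_k(x,z)`. -/
def gbar (x : ℝ) (z : EReal) : ℝ := ⨅ k : ℕ, P.gk k x z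

end Bandit

section WeakDualityAux

variable (P : Bandit)

lemma wd_w_nonneg (x : ℝ) : 0 ≤ P.w x := le_trans zero_le_one (P.hw_one x)

lemma wd_c_nonneg (x : ℝ) (a : Bool) : 0 ≤ P.c x a := by
  cases a
  · exact P.hc0 x
  · exact le_of_lt (lt_of_le_of_lt (P.hc0 x) (P.hc01 x))

lemma wd_c_abs (x : ℝ) (a : Bool) : |P.c x a| ≤ P.M * P.w x := by
  rw [abs_of_nonneg (wd_c_nonneg P x a)]; exact P.hc_bd x a

lemma wd_gamma_nonneg : 0 ≤ P.γ := le_trans P.hβ0 P.hβγ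

lemma wd_one_sub_gamma : 0 < 1 - P.γ := by linarith [P.hγ1]

lemma wd_K_nonneg : 0 ≤ P.M / (1 - P.γ) :=
  div_nonneg P.hM.le (wd_one_sub_gamma P).le

lemma wd_MKγ : P.M + P.M / (1 - P.γ) * P.γ = P.M / (1 - P.γ) := by
  have h : (1 - P.γ) ≠ 0 := ne_of_gt (wd_one_sub_gamma P)
  field_simp
  ring

lemma wd_M_le_K : P.M ≤ P.M / (1 - P.γ) := by
  rw [le_div_iff₀ (wd_one_sub_gamma P)]
  nlinarith [P.hM, wd_gamma_nonneg P]

lemma wd_integrable_of_bound (a : Bool) (x : ℝ) (v : ℝ → ℝ) (hv : Measurable v)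
    (C : ℝ) (hC : ∀ y, |v y| ≤ C * P.w y) : Integrable v (P.κ a x) := by
  refine ((P.hw_int a x).const_mul C).mono' hv.aestronglyMeasurable ?_
  exact Eventually.of_forall fun y => by simpa [Real.norm_eq_abs] using hC y

lemma wd_key_step (a : Bool) (x : ℝ) (v : ℝ → ℝ) (C : ℝ) (hC0 : 0 ≤ C)
    (hC : ∀ y, |v y| ≤ C * P.w y) :
    P.β * |∫ y, v y ∂(P.κ a x)| ≤ C * (P.γ * P.w x) := by
  have h1 : |∫ y, v y ∂(P.κ a x)| ≤ ∫ y, C * P.w y ∂(P.κ a x) := by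
    calc |∫ y, v y ∂(P.κ a x)| = ‖∫ y, v y ∂(P.κ a x)‖ := (Real.norm_eq_abs _).symm
      _ ≤ ∫ y, ‖v y‖ ∂(P.κ a x) := norm_integral_le_integral_norm v
      _ = ∫ y, |v y| ∂(P.κ a x) := by simp [Real.norm_eq_abs]
      _ ≤ ∫ y, C * P.w y ∂(P.κ a x) :=
          integral_mono_of_nonneg (Eventually.of_forall fun y => abs_nonneg _)
            ((P.hw_int a x).const_mul C) (Eventually.of_forall hC)
  have h2 : ∫ y, C * P.w y ∂(P.κ a x) = C * ∫ y, P.w y ∂(P.κ a x) :=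
    integral_const_mul C P.w
  have h3 := P.hw_drift a x
  calc P.β * |∫ y, v y ∂(P.κ a x)| ≤ P.β * (C * ∫ y, P.w y ∂(P.κ a x)) :=
        mul_le_mul_of_nonneg_left (h1.trans_eq h2) P.hβ0
    _ = C * (P.β * ∫ y, P.w y ∂(P.κ a x)) := by ring
    _ ≤ C * (P.γ * P.w x) := mul_le_mul_of_nonneg_left h3 hC0

lemma wd_unif (u : ℝ → EReal → ℝ)
    (hbdd : ∀ z, ∃ C, ∀ x, |u x z| ≤ C * P.w x)
    (heq : ∀ x z, ∃ a : Bool, ∃ s : ℝ, |s| ≤ P.M * P.w x ∧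
      u x z = s + P.β * ∫ y, u y z ∂(P.κ a x)) :
    ∀ x z, |u x z| ≤ P.M / (1 - P.γ) * P.w x := by
  set K := P.M / (1 - P.γ) with hK
  intro x z
  obtain ⟨C, hC⟩ := hbdd z
  set C' := max C 0 with hC'
  have hC'0 : 0 ≤ C' := le_max_right _ _
  have main : ∀ k : ℕ, ∀ x, |u x z| ≤ K * P.w x + P.γ ^ k * C' * P.w x := by
    intro k
    induction k with
    | zero =>
      intro x
      have h1 := hC x
      have h2 : C * P.w x ≤ C' * P.w x :=
        mul_le_mul_of_nonneg_right (le_max_left _ _) (wd_w_nonneg P x)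
      have h3 : 0 ≤ K * P.w x := mul_nonneg (wd_K_nonneg P) (wd_w_nonneg P x)
      simp only [pow_zero]
      linarith
    | succ k ih =>
      intro x
      obtain ⟨a, s, hs, hu⟩ := heq x z
      have hCk : 0 ≤ K + P.γ ^ k * C' :=
        add_nonneg (wd_K_nonneg P) (mul_nonneg (pow_nonneg (wd_gamma_nonneg P) k) hC'0)
      have hptw : ∀ y, |u y z| ≤ (K + P.γ ^ k * C') * P.w y := fun y =>
        calc |u y z| ≤ K * P.w y + P.γ ^ k * C' * P.w y := ih y
          _ = (K + P.γ ^ k * C') * P.w y := by ring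
      have hkey := wd_key_step P a x (fun y => u y z) (K + P.γ ^ k * C') hCk hptw
      calc |u x z| = |s + P.β * ∫ y, u y z ∂(P.κ a x)| := by rw [hu]
        _ ≤ |s| + |P.β * ∫ y, u y z ∂(P.κ a x)| := abs_add_le _ _
        _ = |s| + P.β * |∫ y, u y z ∂(P.κ a x)| := by
            rw [abs_mul, abs_of_nonneg P.hβ0]
        _ ≤ P.M * P.w x + (K + P.γ ^ k * C') * (P.γ * P.w x) := add_le_add hs hkey
        _ = (P.M + K * P.γ) * P.w x + P.γ ^ (k + 1) * C' * P.w x := by ring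
        _ = K * P.w x + P.γ ^ (k + 1) * C' * P.w x := by rw [wd_MKγ P]
  have hlim : Tendsto (fun k : ℕ => K * P.w x + P.γ ^ k * C' * P.w x) atTop
      (𝓝 (K * P.w x)) := by
    have h0 : Tendsto (fun k : ℕ => P.γ ^ k) atTop (𝓝 0) :=
      tendsto_pow_atTop_nhds_zero_of_lt_one (wd_gamma_nonneg P) P.hγ1
    have := ((h0.mul_const C').mul_const (P.w x)).const_add (K * P.w x)
    simpa using this
  exact ge_of_tendsto' hlim fun k => main k x

lemma wd_G_unif : ∀ x z, |P.G x z| ≤ P.M / (1 - P.γ) * P.w x :=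
  wd_unif P P.G P.hG_bdd fun x z => ⟨_, P.c x _, wd_c_abs P x _, P.hG_eq x z⟩

lemma wd_F_unif : ∀ x z, |P.F x z| ≤ P.M / (1 - P.γ) * P.w x :=
  wd_unif P P.F P.hF_bdd fun x z => ⟨_, P.r x _, P.hr_bd x _, P.hF_eq x z⟩

lemma wd_marg_bound (u : ℝ → EReal → ℝ) (base : ℝ → Bool → ℝ)
    (hbase : ∀ x a, |base x a| ≤ P.M * P.w x)
    (hu : ∀ x z, |u x z| ≤ P.M / (1 - P.γ) * P.w x) (x : ℝ) (z : EReal) :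
    |(base x true - base x false) +
        P.β * ((∫ y, u y z ∂(P.κ true x)) - ∫ y, u y z ∂(P.κ false x))| ≤
      (2 * P.M + 2 * (P.M / (1 - P.γ)) * P.γ) * P.w x := by
  set K := P.M / (1 - P.γ) with hK
  set A := ∫ y, u y z ∂(P.κ true x) with hA
  set B := ∫ y, u y z ∂(P.κ false x) with hB
  have h1 : |base x true - base x false| ≤ 2 * (P.M * P.w x) := by
    rw [sub_eq_add_neg]
    refine (abs_add_le _ _).trans ?_
    rw [abs_neg]
    linarith [hbase x true, hbase x false]
  have h2 : P.β * |A| ≤ K * (P.γ * P.w x) :=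
    wd_key_step P true x (fun y => u y z) K (wd_K_nonneg P) (fun y => hu y z)
  have h3 : P.β * |B| ≤ K * (P.γ * P.w x) :=
    wd_key_step P false x (fun y => u y z) K (wd_K_nonneg P) (fun y => hu y z)
  have h4 : |P.β * (A - B)| ≤ P.β * |A| + P.β * |B| := by
    rw [abs_mul, abs_of_nonneg P.hβ0]
    have : |A - B| ≤ |A| + |B| := by
      rw [sub_eq_add_neg]
      refine (abs_add_le _ _).trans ?_
      rw [abs_neg]
    calc P.β * |A - B| ≤ P.β * (|A| + |B|) := mul_le_mul_of_nonneg_left this P.hβ0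
      _ = P.β * |A| + P.β * |B| := by ring
  calc |(base x true - base x false) + P.β * (A - B)| ≤
        |base x true - base x false| + |P.β * (A - B)| := abs_add_le _ _
    _ ≤ 2 * (P.M * P.w x) + (K * (P.γ * P.w x) + K * (P.γ * P.w x)) := by linarith
    _ = (2 * P.M + 2 * K * P.γ) * P.w x := by ring

lemma wd_g_bound (x : ℝ) (z : EReal) :
    |P.g x z| ≤ (2 * P.M + 2 * (P.M / (1 - P.γ)) * P.γ) * P.w x :=
  wd_marg_bound P P.G P.c (wd_c_abs P) (wd_G_unif P) x z

lemma wd_f_bound (x : ℝ) (z : EReal) :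
    |P.f x z| ≤ (2 * P.M + 2 * (P.M / (1 - P.γ)) * P.γ) * P.w x :=
  wd_marg_bound P P.F P.r P.hr_bd (wd_F_unif P) x z

lemma wd_kint_meas (a : Bool) (v : ℝ → ℝ) (hv : Measurable v) :
    Measurable fun x => ∫ y, v y ∂(P.κ a x) := by
  haveI := P.hκ a
  have h : StronglyMeasurable (Function.uncurry fun (_ : ℝ) (y : ℝ) => v y) :=
    (hv.comp measurable_snd).stronglyMeasurable
  exact h.integral_kernel_prod_right.measurable

lemma wd_g_meas (z : EReal) : Measurable fun y => P.g y z := by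
  refine Measurable.add ?_ ?_
  · exact (P.hc_cont true).measurable.sub (P.hc_cont false).measurable
  · exact ((wd_kint_meas P true _ (P.hG_meas z)).sub
      (wd_kint_meas P false _ (P.hG_meas z))).const_mul P.β

lemma wd_f_meas (z : EReal) : Measurable fun y => P.f y z := by
  refine Measurable.add ?_ ?_
  · exact (P.hr_cont true).measurable.sub (P.hr_cont false).measurable
  · exact ((wd_kint_meas P true _ (P.hF_meas z)).sub
      (wd_kint_meas P false _ (P.hF_meas z))).const_mul P.β

lemma wd_Gk_bound : ∀ (k : ℕ) (x : ℝ) (z : EReal),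
    |P.Gk k x z| ≤ P.M / (1 - P.γ) * P.w x := by
  intro k
  induction k with
  | zero =>
    intro x z
    calc |P.Gk 0 x z| = |P.c x (decide (z < (x : EReal)))| := by simp [Bandit.Gk]
      _ ≤ P.M * P.w x := wd_c_abs P x _
      _ ≤ P.M / (1 - P.γ) * P.w x :=
          mul_le_mul_of_nonneg_right (wd_M_le_K P) (wd_w_nonneg P x)
  | succ k ih =>
    intro x z
    have hkey := wd_key_step P (decide (z < (x : EReal))) x (fun y => P.Gk k y z)
      (P.M / (1 - P.γ)) (wd_K_nonneg P) (fun y => ih y z)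
    calc |P.Gk (k + 1) x z| =
        |P.c x (decide (z < (x : EReal))) +
          P.β * ∫ y, P.Gk k y z ∂(P.κ (decide (z < (x : EReal))) x)| := by
          simp [Bandit.Gk]
      _ ≤ |P.c x (decide (z < (x : EReal)))| +
          |P.β * ∫ y, P.Gk k y z ∂(P.κ (decide (z < (x : EReal))) x)| := abs_add_le _ _
      _ ≤ P.M * P.w x + P.β * |∫ y, P.Gk k y z ∂(P.κ (decide (z < (x : EReal))) x)| := by
          rw [abs_mul, abs_of_nonneg P.hβ0]
          exact add_le_add_left (wd_c_abs P x _) _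
      _ ≤ P.M * P.w x + P.M / (1 - P.γ) * (P.γ * P.w x) := add_le_add_right hkey _
      _ = (P.M + P.M / (1 - P.γ) * P.γ) * P.w x := by ring
      _ = P.M / (1 - P.γ) * P.w x := by rw [wd_MKγ P]

lemma wd_Gk_jointmeas : ∀ k : ℕ,
    Measurable fun q : ℝ × ℝ => P.Gk k q.1 ((q.2 : ℝ) : EReal) := by
  have hset : MeasurableSet {q : ℝ × ℝ | q.2 < q.1} :=
    measurableSet_lt measurable_snd measurable_fst
  intro k
  induction k with
  | zero =>
    have heq : (fun q : ℝ × ℝ => P.Gk 0 q.1 ((q.2 : ℝ) : EReal)) =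
        fun q : ℝ × ℝ => if q.2 < q.1 then P.c q.1 true else P.c q.1 false := by
      funext q
      by_cases h : q.2 < q.1 <;>
        simp [Bandit.Gk, h, EReal.coe_lt_coe_iff]
    rw [heq]
    exact Measurable.ite hset ((P.hc_cont true).measurable.comp measurable_fst)
      ((P.hc_cont false).measurable.comp measurable_fst)
  | succ k ih =>
    have hint : ∀ a : Bool,
        Measurable fun q : ℝ × ℝ => ∫ y, P.Gk k y ((q.2 : ℝ) : EReal) ∂(P.κ a q.1) := by
      intro a
      haveI := P.hκ a
      have hm : StronglyMeasurable
          (Function.uncurry fun (q : ℝ × ℝ) (y : ℝ) => P.Gk k y ((q.2 : ℝ) : EReal)) := by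
        apply Measurable.stronglyMeasurable
        exact ih.comp (measurable_snd.prodMk (measurable_snd.comp measurable_fst))
      have h2 := hm.integral_kernel_prod_right (κ := (P.κ a).comap Prod.fst measurable_fst)
      simp only [Kernel.comap_apply] at h2
      exact h2.measurable
    have heq : (fun q : ℝ × ℝ => P.Gk (k + 1) q.1 ((q.2 : ℝ) : EReal)) =
        fun q : ℝ × ℝ =>
          if q.2 < q.1 then
            P.c q.1 true + P.β * ∫ y, P.Gk k y ((q.2 : ℝ) : EReal) ∂(P.κ true q.1)
          else
            P.c q.1 false + P.β * ∫ y, P.Gk k y ((q.2 : ℝ) : EReal) ∂(P.κ false q.1) := by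
      funext q
      by_cases h : q.2 < q.1 <;>
        simp [Bandit.Gk, h, EReal.coe_lt_coe_iff]
    rw [heq]
    refine Measurable.ite hset ?_ ?_
    · exact ((P.hc_cont true).measurable.comp measurable_fst).add
        ((hint true).const_mul P.β)
    · exact ((P.hc_cont false).measurable.comp measurable_fst).add
        ((hint false).const_mul P.β)

lemma wd_Gk_meas_right (k : ℕ) (x : ℝ) :
    Measurable fun b : ℝ => P.Gk k x ((b : ℝ) : EReal) :=
  (wd_Gk_jointmeas P k).comp (measurable_const.prodMk measurable_id)

lemma wd_G_sub_Gk : ∀ (k : ℕ) (x b : ℝ),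
    |P.G x b - P.Gk k x b| ≤ P.M / (1 - P.γ) * P.γ ^ (k + 1) * P.w x := by
  intro k
  induction k with
  | zero =>
    intro x b
    have hdiff : P.G x b - P.Gk 0 x b =
        P.β * ∫ y, P.G y (b : EReal) ∂(P.κ (decide ((b : EReal) < (x : EReal))) x) := by
      rw [P.hG_eq x b]; simp [Bandit.Gk]
    rw [hdiff, abs_mul, abs_of_nonneg P.hβ0]
    have hkey := wd_key_step P (decide ((b : EReal) < (x : EReal))) x
      (fun y => P.G y (b : EReal)) (P.M / (1 - P.γ)) (wd_K_nonneg P)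
      (fun y => wd_G_unif P y (b : EReal))
    calc P.β * |∫ y, P.G y (b : EReal) ∂(P.κ (decide ((b : EReal) < (x : EReal))) x)| ≤
        P.M / (1 - P.γ) * (P.γ * P.w x) := hkey
      _ = P.M / (1 - P.γ) * P.γ ^ (0 + 1) * P.w x := by ring
  | succ k ih =>
    intro x b
    set a := decide ((b : EReal) < (x : EReal)) with ha
    have hGint : Integrable (fun y => P.G y (b : EReal)) (P.κ a x) :=
      wd_integrable_of_bound P a x _ (P.hG_meas (b : EReal)) (P.M / (1 - P.γ))
        (fun y => wd_G_unif P y (b : EReal))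
    have hGkint : Integrable (fun y => P.Gk k y (b : EReal)) (P.κ a x) :=
      wd_integrable_of_bound P a x _
        ((wd_Gk_jointmeas P k).comp (measurable_id.prodMk measurable_const))
        (P.M / (1 - P.γ)) (fun y => wd_Gk_bound P k y (b : EReal))
    have hdiff : P.G x b - P.Gk (k + 1) x b =
        P.β * ∫ y, (P.G y (b : EReal) - P.Gk k y (b : EReal)) ∂(P.κ a x) := by
      rw [integral_sub hGint hGkint, P.hG_eq x b]
      simp only [Bandit.Gk, ← ha]
      ring
    rw [hdiff, abs_mul, abs_of_nonneg P.hβ0]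
    have hkey := wd_key_step P a x
      (fun y => P.G y (b : EReal) - P.Gk k y (b : EReal))
      (P.M / (1 - P.γ) * P.γ ^ (k + 1))
      (mul_nonneg (wd_K_nonneg P) (pow_nonneg (wd_gamma_nonneg P) _))
      (fun y => ih y b)
    calc P.β * |∫ y, (P.G y (b : EReal) - P.Gk k y (b : EReal)) ∂(P.κ a x)| ≤
        P.M / (1 - P.γ) * P.γ ^ (k + 1) * (P.γ * P.w x) := hkey
      _ = P.M / (1 - P.γ) * P.γ ^ (k + 1 + 1) * P.w x := by ring

lemma wd_G_snd_meas (x : ℝ) : Measurable fun b : ℝ => P.G x b := by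
  apply measurable_of_tendsto_metrizable
    (f := fun (k : ℕ) (b : ℝ) => P.Gk k x ((b : ℝ) : EReal))
    (fun k => wd_Gk_meas_right P k x)
  rw [tendsto_pi_nhds]
  intro b
  rw [tendsto_iff_dist_tendsto_zero]
  have hpow : Tendsto (fun k : ℕ => P.γ ^ (k + 1)) atTop (𝓝 0) :=
    (tendsto_pow_atTop_nhds_zero_of_lt_one (wd_gamma_nonneg P) P.hγ1).comp
      (tendsto_add_atTop_nat 1)
  have hseq : Tendsto (fun k : ℕ => P.M / (1 - P.γ) * P.γ ^ (k + 1) * P.w x) atTop (𝓝 0) := by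
    have := (hpow.const_mul (P.M / (1 - P.γ))).mul_const (P.w x)
    simpa using this
  refine squeeze_zero (fun k => dist_nonneg) (fun k => ?_) hseq
  rw [Real.dist_eq, abs_sub_comm]
  exact wd_G_sub_Gk P k x b

end WeakDualityAux

/-- **Weak duality** between the primal LP relaxation `R_λ(x)` and its dual
`D_λ(x)`: the dual objective value of any dual-feasible `(ψ, η, ξ)` is at most
the primal objective value of any primal-feasible `(μ, γ₀)`. -/
theorem weak_duality (P : Bandit) (h1 : P.PCLI1)
    (hgj : Measurable fun q : ℝ × ℝ => P.g q.1 (q.2 : EReal))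
    (x lam : ℝ)
    (μ : Measure ℝ) (hμw : MeasureTheory.Integrable P.w μ) (γ₀ : ℝ)
    (hprimal1 : ∀ b : ℝ, P.G x b ≤ (∫ y in Set.Ioi b, P.g y b ∂μ) + γ₀)
    (hprimal2 : (∫ y, P.g y ⊥ ∂μ) + γ₀ = P.G x ⊥)
    (hprimal3 : P.G x ⊤ ≤ γ₀)
    (ψ : ℝ → ℝ) (hψb : ∃ C, ∀ z : ℝ, |ψ z| ≤ C) (hψc : Continuous ψ)
    (hψm : Monotone ψ)
    (νψ : Measure ℝ) (hνψ : IsLSMeasureOfMono ψ νψ)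
    (η ξ : ℝ) (hξ : 0 ≤ ξ)
    (hdual1 : ∀ y : ℝ, (∫ b in Set.Iio y, P.g y b ∂νψ) + P.g y ⊥ * η ≤ P.f y ⊥)
    (hdual2 : (νψ Set.univ).toReal + η + ξ = lam) :
    (∫ b, P.G x b ∂νψ) + P.G x ⊥ * η + P.G x ⊤ * ξ ≤
      (∫ y, P.f y ⊥ ∂μ) + lam * γ₀ := by
  classical
  set K := P.M / (1 - P.γ) with hKdef
  set Kg := 2 * P.M + 2 * (P.M / (1 - P.γ)) * P.γ with hKgdef
  have hKg0 : 0 ≤ Kg := by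
    have := wd_K_nonneg P
    have := wd_gamma_nonneg P
    have := P.hM
    positivity
  -- μ is a finite measure
  haveI hμfin : IsFiniteMeasure μ := by
    constructor
    calc μ Set.univ = ∫⁻ _, 1 ∂μ := lintegral_one.symm
      _ ≤ ∫⁻ y, ‖P.w y‖₊ ∂μ := by
          refine lintegral_mono fun y => ?_
          rw [← enorm_eq_nnnorm, Real.enorm_eq_ofReal (wd_w_nonneg P y), ← ENNReal.ofReal_one]
          exact ENNReal.ofReal_le_ofReal (P.hw_one y)
      _ < ⊤ := hμw.2
  -- νψ is a finite measure
  obtain ⟨Cψ, hCψ⟩ := hψb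
  haveI hνfin : IsFiniteMeasure νψ := by
    constructor
    have hU : (Set.univ : Set ℝ) = ⋃ n : ℕ, Set.Ioc (-(n : ℝ)) n := by
      ext y
      simp only [Set.mem_univ, Set.mem_iUnion, Set.mem_Ioc, true_iff]
      obtain ⟨n, hn⟩ := exists_nat_gt |y|
      obtain ⟨h1, h2⟩ := abs_lt.mp hn
      exact ⟨n, by linarith, by linarith⟩
    have hdir : Directed (· ⊆ ·) fun n : ℕ => Set.Ioc (-(n : ℝ)) n := by
      refine Monotone.directed_le fun m n hmn => Set.Ioc_subset_Ioc ?_ ?_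
      · exact neg_le_neg (Nat.cast_le.mpr hmn)
      · exact Nat.cast_le.mpr hmn
    calc νψ Set.univ = ⨆ n : ℕ, νψ (Set.Ioc (-(n : ℝ)) n) := by
          rw [hU, hdir.measure_iUnion]
      _ ≤ ENNReal.ofReal (2 * Cψ) := by
          refine iSup_le fun n => ?_
          have hn0 : -(n : ℝ) ≤ (n : ℝ) := by
            have : (0 : ℝ) ≤ n := Nat.cast_nonneg n
            linarith
          rw [hνψ _ _ hn0]
          refine ENNReal.ofReal_le_ofReal ?_
          have h1 := abs_le.mp (hCψ (n : ℝ))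
          have h2 := abs_le.mp (hCψ (-(n : ℝ)))
          linarith [h1.2, h2.1]
      _ < ⊤ := ENNReal.ofReal_lt_top
  -- the product integrand
  set H : ℝ × ℝ → ℝ := fun q => if q.2 < q.1 then P.g q.1 q.2 else 0 with hHdef
  have hHmeas : Measurable H :=
    Measurable.ite (measurableSet_lt measurable_snd measurable_fst) hgj measurable_const
  have hHbd : ∀ q : ℝ × ℝ, |H q| ≤ Kg * P.w q.1 := by
    intro q
    by_cases h : q.2 < q.1
    · simpa [hHdef, h] using wd_g_bound P q.1 q.2
    · simp only [hHdef, h, if_false, abs_zero]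
      exact mul_nonneg hKg0 (wd_w_nonneg P q.1)
  have hwprod : Integrable (fun q : ℝ × ℝ => P.w q.1) (μ.prod νψ) := by
    refine (integrable_prod_iff ?_).2 ⟨?_, ?_⟩
    · exact (P.hw_meas.comp measurable_fst).aestronglyMeasurable
    · exact Eventually.of_forall fun y => by simpa using integrable_const (P.w y)
    · have h := hμw.norm.const_mul (νψ Set.univ).toReal
      refine h.congr (Eventually.of_forall fun y => ?_)
      simp [integral_const, smul_eq_mul, measureReal_def]
  have hHint : Integrable H (μ.prod νψ) := by
    refine (hwprod.const_mul Kg).mono' hHmeas.aestronglyMeasurable ?_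
    exact Eventually.of_forall fun q => by simpa [Real.norm_eq_abs] using hHbd q
  set I : ℝ → ℝ := fun b => ∫ y in Set.Ioi b, P.g y b ∂μ with hIdef
  set J : ℝ → ℝ := fun y => ∫ b in Set.Iio y, P.g y b ∂νψ with hJdef
  have hI_eq : ∀ b, I b = ∫ y, H (y, b) ∂μ := by
    intro b
    have heq : ∫ y, H (y, b) ∂μ =
        ∫ y, Set.indicator (Set.Ioi b) (fun y => P.g y b) y ∂μ := by
      refine integral_congr_ae (Eventually.of_forall fun y => ?_)
      simp [hHdef, Set.indicator_apply, Set.mem_Ioi]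
    rw [heq, integral_indicator measurableSet_Ioi]
  have hJ_eq : ∀ y, J y = ∫ b, H (y, b) ∂νψ := by
    intro y
    have heq : ∫ b, H (y, b) ∂νψ =
        ∫ b, Set.indicator (Set.Iio y) (fun b => P.g y b) b ∂νψ := by
      refine integral_congr_ae (Eventually.of_forall fun b => ?_)
      simp [hHdef, Set.indicator_apply, Set.mem_Iio]
    rw [heq, integral_indicator measurableSet_Iio]
  have hIint : Integrable I νψ :=
    hHint.integral_prod_right.congr (Eventually.of_forall fun b => (hI_eq b).symm)
  have hJint : Integrable J μ :=
    hHint.integral_prod_left.congr (Eventually.of_forall fun y => (hJ_eq y).symm)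
  have hIJ : ∫ b, I b ∂νψ = ∫ y, J y ∂μ := by
    calc ∫ b, I b ∂νψ = ∫ b, ∫ y, H (y, b) ∂μ ∂νψ :=
          integral_congr_ae (Eventually.of_forall hI_eq)
      _ = ∫ y, ∫ b, H (y, b) ∂νψ ∂μ :=
          (integral_integral_swap (f := fun y b => H (y, b)) hHint).symm
      _ = ∫ y, J y ∂μ := integral_congr_ae (Eventually.of_forall fun y => (hJ_eq y).symm)
  -- integrability of the various integrands
  have hGνint : Integrable (fun b : ℝ => P.G x b) νψ := by
    refine (integrable_const (K * P.w x)).mono'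
      (wd_G_snd_meas P x).aestronglyMeasurable
      (Eventually.of_forall fun b => ?_)
    simpa [Real.norm_eq_abs] using wd_G_unif P x (b : EReal)
  have hgbot_int : Integrable (fun y => P.g y ⊥) μ := by
    refine (hμw.const_mul Kg).mono' (wd_g_meas P ⊥).aestronglyMeasurable
      (Eventually.of_forall fun y => ?_)
    simpa [Real.norm_eq_abs] using wd_g_bound P y ⊥
  have hf_int : Integrable (fun y => P.f y ⊥) μ := by
    refine (hμw.const_mul Kg).mono' (wd_f_meas P ⊥).aestronglyMeasurable
      (Eventually.of_forall fun y => ?_)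
    simpa [Real.norm_eq_abs] using wd_f_bound P y ⊥
  -- step A
  have hA : ∫ b, P.G x b ∂νψ ≤ ∫ b, (I b + γ₀) ∂νψ :=
    integral_mono hGνint (hIint.add (integrable_const _)) fun b => hprimal1 b
  have hA2 : ∫ b, (I b + γ₀) ∂νψ = (∫ b, I b ∂νψ) + (νψ Set.univ).toReal * γ₀ := by
    rw [integral_add hIint (integrable_const _), integral_const, smul_eq_mul, measureReal_def]
  -- step E
  have hE1 : ∫ y, (J y + P.g y ⊥ * η) ∂μ ≤ ∫ y, P.f y ⊥ ∂μ :=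
    integral_mono (hJint.add (hgbot_int.mul_const η)) hf_int fun y => hdual1 y
  have hE2 : ∫ y, (J y + P.g y ⊥ * η) ∂μ =
      (∫ y, J y ∂μ) + (∫ y, P.g y ⊥ ∂μ) * η := by
    rw [integral_add hJint (hgbot_int.mul_const η), integral_mul_const]
  -- final assembly
  have hC : P.G x ⊥ * η = (∫ y, P.g y ⊥ ∂μ) * η + γ₀ * η := by
    rw [← hprimal2]; ring
  have hD : P.G x ⊤ * ξ ≤ γ₀ * ξ := mul_le_mul_of_nonneg_right hprimal3 hξ
  have hTη : (νψ Set.univ).toReal * γ₀ + γ₀ * η + γ₀ * ξ = lam * γ₀ := by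
    rw [← hdual2]; ring
  linarith
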